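/- Let r₀ = (0, y₀, z₀) ∈ ℝ³ with z₀ > 0 and let p_m = (0, mΔ, 0) for m = -M,...,M with Δ > 0. Define s^{(j)} = (1/(2M+1)) ∑_m ‖r₀ - p_m‖^{-j} and s̄^{(j)} = (1/(2M+1)) ∑_m (mΔ - y₀)·‖r₀ - p_m‖^{-(j+1)}. Then for all k, l ∈ ℕ, s^{(2k)} · (s^{(2(l-1))} - z₀² s^{(2l)}) ≥ (s̄^{(k+l-1)})². -/

import Mathlib

/-- Cauchy–Schwarz inequality for the ULA power sums:
`s^{(2k)} (s^{(2(l-1))} - z₀² s^{(2l)}) ≥ (s̄^{(k+l-1)})²`. -/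
theorem ula_cauchy_schwarz (M : ℕ) (Δ y₀ z₀ : ℝ) (hΔ : 0 < Δ) (hz : 0 < z₀)
    (r₀ : EuclideanSpace ℝ (Fin 3))
    (hr₀ : r₀ = (WithLp.equiv 2 (Fin 3 → ℝ)).symm ![0, y₀, z₀])
    (p : ℤ → EuclideanSpace ℝ (Fin 3))
    (hp : ∀ m : ℤ, p m = (WithLp.equiv 2 (Fin 3 → ℝ)).symm ![0, (m : ℝ) * Δ, 0])
    (s sb : ℤ → ℝ)
    (hs : ∀ j : ℤ, s j =
      (1 / (2 * (M : ℝ) + 1)) * ∑ m ∈ Finset.Icc (-(M : ℤ)) (M : ℤ), ‖r₀ - p m‖ ^ (-j))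
    (hsb : ∀ j : ℤ, sb j =
      (1 / (2 * (M : ℝ) + 1)) * ∑ m ∈ Finset.Icc (-(M : ℤ)) (M : ℤ),
        ((m : ℝ) * Δ - y₀) * ‖r₀ - p m‖ ^ (-(j + 1)))
    (k l : ℕ) :
    (sb ((k : ℤ) + l - 1)) ^ 2 ≤ s (2 * k) * (s (2 * ((l : ℤ) - 1)) - z₀ ^ 2 * s (2 * l)) := by
  have ha2 : ∀ m : ℤ, ‖r₀ - p m‖ ^ 2 = ((m : ℝ) * Δ - y₀) ^ 2 + z₀ ^ 2 := by
    intro m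
    have hsub : r₀ - p m = (WithLp.equiv 2 (Fin 3 → ℝ)).symm ![0, y₀ - m * Δ, z₀] := by
      rw [hr₀, hp]
      ext i
      fin_cases i <;> simp
    rw [hsub, EuclideanSpace.norm_eq, Real.sq_sqrt (by positivity)]
    simp [Fin.sum_univ_three]
    ring
  have hapos : ∀ m : ℤ, 0 < ‖r₀ - p m‖ := by
    intro m
    have h2 : 0 < ‖r₀ - p m‖ ^ 2 := by rw [ha2]; positivity
    have hne : ‖r₀ - p m‖ ≠ 0 := fun h => by simp [h] at h2
    exact (norm_nonneg _).lt_of_ne (Ne.symm hne)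
  rw [hs, hs, hs, hsb]
  set c : ℝ := 1 / (2 * (M : ℝ) + 1) with hc
  have hc0 : 0 ≤ c := by positivity
  set S := Finset.Icc (-(M : ℤ)) (M : ℤ) with hS
  set a : ℤ → ℝ := fun m => ‖r₀ - p m‖ with haa
  set f : ℤ → ℝ := fun m => a m ^ (-(k : ℤ)) with hf
  set g : ℤ → ℝ := fun m => ((m : ℝ) * Δ - y₀) * a m ^ (-(l : ℤ)) with hg
  have h1 : ∀ m ∈ S, a m ^ (-(2 * (k : ℤ))) = (f m) ^ 2 := by
    intro m _
    rw [hf]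
    rw [← zpow_natCast (a m ^ (-(k : ℤ))) 2, ← zpow_mul]
    norm_num
    ring_nf
  have h2 : ∀ m ∈ S,
      a m ^ (-(2 * ((l : ℤ) - 1))) - z₀ ^ 2 * a m ^ (-(2 * (l : ℤ))) = (g m) ^ 2 := by
    intro m _
    have hne := (hapos m).ne'
    have e1 : a m ^ (-(2 * ((l : ℤ) - 1))) = a m ^ 2 * a m ^ (-(2 * (l : ℤ))) := by
      rw [← zpow_natCast (a m) 2, ← zpow_add₀ hne]
      ring_nf
      rfl
    rw [e1, ha2, hg, mul_pow, ← zpow_natCast (a m ^ (-(l : ℤ))) 2, ← zpow_mul]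
    ring_nf
  have h3 : ∀ m ∈ S,
      ((m : ℝ) * Δ - y₀) * a m ^ (-(((k : ℤ) + l - 1) + 1)) = f m * g m := by
    intro m _
    have hne := (hapos m).ne'
    rw [hf, hg, mul_comm (a m ^ (-(k : ℤ))), mul_assoc, ← zpow_add₀ hne]
    ring_nf
    rfl
  rw [Finset.sum_congr rfl h3]
  rw [Finset.sum_congr rfl h1]
  have hsplit : (∑ m ∈ S, a m ^ (-(2 * ((l : ℤ) - 1)))) -
      z₀ ^ 2 * ∑ m ∈ S, a m ^ (-(2 * (l : ℤ))) = ∑ m ∈ S, (g m) ^ 2 := by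
    rw [Finset.mul_sum, ← Finset.sum_sub_distrib]
    exact Finset.sum_congr rfl h2
  have hCS := Finset.sum_mul_sq_le_sq_mul_sq S f g
  have hf2 : 0 ≤ ∑ m ∈ S, (f m) ^ 2 := Finset.sum_nonneg fun m _ => sq_nonneg _
  have hg2 : 0 ≤ ∑ m ∈ S, (g m) ^ 2 := Finset.sum_nonneg fun m _ => sq_nonneg _
  calc (c * ∑ m ∈ S, f m * g m) ^ 2
      = c ^ 2 * (∑ m ∈ S, f m * g m) ^ 2 := by ring
    _ ≤ c ^ 2 * ((∑ m ∈ S, (f m) ^ 2) * ∑ m ∈ S, (g m) ^ 2) := by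
        exact mul_le_mul_of_nonneg_left hCS (sq_nonneg c)
    _ = (c * ∑ m ∈ S, (f m) ^ 2) * (c * ∑ m ∈ S, (g m) ^ 2) := by ring
    _ = (c * ∑ m ∈ S, (f m) ^ 2) *
        (c * ∑ m ∈ S, a m ^ (-(2 * ((l : ℤ) - 1))) -
          z₀ ^ 2 * (c * ∑ m ∈ S, a m ^ (-(2 * (l : ℤ))))) := by
        rw [← hsplit]; ring
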